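/- Suppose e^{iθ} is an eigenvalue of the pencil (S_γ, T_γ) from the discrete-time theorem with eigenvector (q, s) ∈ ℂ^{2n}, i.e. S_γ(q,s) = e^{iθ}T_γ(q,s), where e^{iθ}E - A is invertible and γ is not a singular value of D. Define v and u via (v, u) = [[-D, γI], [γI, -D*]]^{-1} [[C, 0],[0, B*]] (q, s). Then u and v are nonzero, G(e^{iθ})v = γu and G(e^{iθ})*u = γv, so γ is a singular value of G(e^{iθ}). -/

import Mathlib

open Matrix Complex

noncomputable def Rmat {m p : ℕ} (D : Matrix (Fin p) (Fin m) ℂ) (γ : ℝ) :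
    Matrix (Fin m) (Fin m) ℂ := Dᴴ * D - ((γ : ℂ) ^ 2) • 1

noncomputable def Smat {m p : ℕ} (D : Matrix (Fin p) (Fin m) ℂ) (γ : ℝ) :
    Matrix (Fin p) (Fin p) ℂ := D * Dᴴ - ((γ : ℂ) ^ 2) • 1

noncomputable def Spencil {n m p : ℕ} (A E : Matrix (Fin n) (Fin n) ℂ)
    (B : Matrix (Fin n) (Fin m) ℂ) (C : Matrix (Fin p) (Fin n) ℂ)
    (D : Matrix (Fin p) (Fin m) ℂ) (γ : ℝ) :
    Matrix (Fin n ⊕ Fin n) (Fin n ⊕ Fin n) ℂ :=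
  fromBlocks (A - B * (Rmat D γ)⁻¹ * Dᴴ * C) (-((γ : ℂ) • (B * (Rmat D γ)⁻¹ * Bᴴ)))
    0 Eᴴ

noncomputable def Tpencil {n m p : ℕ} (A E : Matrix (Fin n) (Fin n) ℂ)
    (B : Matrix (Fin n) (Fin m) ℂ) (C : Matrix (Fin p) (Fin n) ℂ)
    (D : Matrix (Fin p) (Fin m) ℂ) (γ : ℝ) :
    Matrix (Fin n ⊕ Fin n) (Fin n ⊕ Fin n) ℂ :=
  fromBlocks E 0 (-((γ : ℂ) • (Cᴴ * (Smat D γ)⁻¹ * C))) (A - B * (Rmat D γ)⁻¹ * Dᴴ * C)ᴴ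

section aux
variable {m p : ℕ} (D : Matrix (Fin p) (Fin m) ℂ) (γ : ℝ)
lemma Rmat_herm : (Rmat D γ)ᴴ = Rmat D γ := by
  simp [Rmat, conjTranspose_sub, conjTranspose_smul, conjTranspose_mul]
lemma Smat_herm : (Smat D γ)ᴴ = Smat D γ := by
  simp [Smat, conjTranspose_sub, conjTranspose_smul, conjTranspose_mul]
lemma Rmat_inv_herm : ((Rmat D γ)⁻¹)ᴴ = (Rmat D γ)⁻¹ := by
  rw [conjTranspose_nonsing_inv, Rmat_herm]
lemma Smat_inv_herm : ((Smat D γ)⁻¹)ᴴ = (Smat D γ)⁻¹ := by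
  rw [conjTranspose_nonsing_inv, Smat_herm]
lemma SD_eq_DR : Smat D γ * D = D * Rmat D γ := by
  simp [Smat, Rmat, Matrix.sub_mul, Matrix.mul_sub, Matrix.mul_assoc]
lemma D_mul_Rinv (hR : IsUnit (Rmat D γ)) (hS : IsUnit (Smat D γ)) :
    D * (Rmat D γ)⁻¹ = (Smat D γ)⁻¹ * D := by
  have hRd := (Matrix.isUnit_iff_isUnit_det _).mp hR
  have hSd := (Matrix.isUnit_iff_isUnit_det _).mp hS
  calc D * (Rmat D γ)⁻¹
      = (Smat D γ)⁻¹ * (Smat D γ) * (D * (Rmat D γ)⁻¹) := by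
        rw [Matrix.nonsing_inv_mul _ hSd, Matrix.one_mul]
    _ = (Smat D γ)⁻¹ * (Smat D γ * D) * (Rmat D γ)⁻¹ := by
        rw [Matrix.mul_assoc, Matrix.mul_assoc, Matrix.mul_assoc]
    _ = (Smat D γ)⁻¹ * (D * (Rmat D γ * (Rmat D γ)⁻¹)) := by
        rw [SD_eq_DR, Matrix.mul_assoc, Matrix.mul_assoc]
    _ = (Smat D γ)⁻¹ * D := by rw [Matrix.mul_nonsing_inv _ hRd, Matrix.mul_one]
lemma Dh_mul_Sinv (hR : IsUnit (Rmat D γ)) (hS : IsUnit (Smat D γ)) :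
    Dᴴ * (Smat D γ)⁻¹ = (Rmat D γ)⁻¹ * Dᴴ := by
  have h := congrArg conjTranspose (D_mul_Rinv D γ hR hS)
  simpa [conjTranspose_mul, Rmat_inv_herm, Smat_inv_herm] using h.symm
lemma one_sub_DRD (hR : IsUnit (Rmat D γ)) (hS : IsUnit (Smat D γ)) :
    1 - D * (Rmat D γ)⁻¹ * Dᴴ = (-(γ:ℂ)^2) • (Smat D γ)⁻¹ := by
  have hSd := (Matrix.isUnit_iff_isUnit_det _).mp hS
  have hdiff : Smat D γ - D * Dᴴ = (-(γ:ℂ)^2) • 1 := by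
    simp [Smat, sub_sub_cancel_left]
  calc 1 - D * (Rmat D γ)⁻¹ * Dᴴ
      = (Smat D γ)⁻¹ * Smat D γ - (Smat D γ)⁻¹ * (D * Dᴴ) := by
        rw [D_mul_Rinv D γ hR hS, Matrix.nonsing_inv_mul _ hSd, Matrix.mul_assoc]
    _ = (Smat D γ)⁻¹ * (Smat D γ - D * Dᴴ) := by rw [Matrix.mul_sub]
    _ = (-(γ:ℂ)^2) • (Smat D γ)⁻¹ := by
        rw [hdiff, Matrix.mul_smul, Matrix.mul_one]
lemma one_sub_DDR (hR : IsUnit (Rmat D γ)) :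
    1 - Dᴴ * D * (Rmat D γ)⁻¹ = (-(γ:ℂ)^2) • (Rmat D γ)⁻¹ := by
  have hRd := (Matrix.isUnit_iff_isUnit_det _).mp hR
  have hDD : Dᴴ * D = Rmat D γ + ((γ:ℂ)^2) • 1 := by simp [Rmat]
  rw [hDD, Matrix.add_mul, Matrix.mul_nonsing_inv _ hRd, Matrix.smul_mul, Matrix.one_mul]
  simp [neg_smul]
end aux

/-- If `e^{iθ}` is an eigenvalue of the pencil `(S_γ, T_γ)` with eigenvector `(q,s)`,
then the vectors `u, v` obtained via the inverse block matrix are nonzero singular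
vectors of `G(e^{iθ})` for the singular value `γ`. -/
theorem pencil_eigenvector_gives_singular_vectors {n m p : ℕ}
    (A E : Matrix (Fin n) (Fin n) ℂ) (B : Matrix (Fin n) (Fin m) ℂ)
    (C : Matrix (Fin p) (Fin n) ℂ) (D : Matrix (Fin p) (Fin m) ℂ)
    (θ γ : ℝ) (hγ : 0 < γ)
    (hR : IsUnit (Rmat D γ)) (hS : IsUnit (Smat D γ))
    (hZ : IsUnit (Complex.exp (Complex.I * (θ : ℂ)) • E - A))
    (q s : Fin n → ℂ) (hqs : Sum.elim q s ≠ 0)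
    (heig : Spencil A E B C D γ *ᵥ Sum.elim q s =
      Complex.exp (Complex.I * (θ : ℂ)) • (Tpencil A E B C D γ *ᵥ Sum.elim q s))
    (v : Fin m → ℂ) (u : Fin p → ℂ)
    (hvu : Sum.elim v u =
      fromBlocks (-((Rmat D γ)⁻¹ * Dᴴ)) (-((γ : ℂ) • (Rmat D γ)⁻¹))
          (-((γ : ℂ) • (Smat D γ)⁻¹)) (-(D * (Rmat D γ)⁻¹)) *ᵥ
        Sum.elim (C *ᵥ q) (Bᴴ *ᵥ s)) :
    u ≠ 0 ∧ v ≠ 0 ∧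
    (C * (Complex.exp (Complex.I * (θ : ℂ)) • E - A)⁻¹ * B + D) *ᵥ v = (γ : ℂ) • u ∧
    (C * (Complex.exp (Complex.I * (θ : ℂ)) • E - A)⁻¹ * B + D)ᴴ *ᵥ u = (γ : ℂ) • v := by
  set z := Complex.exp (Complex.I * (θ : ℂ)) with hzdef
  set M := z • E - A with hMdef
  have hMd : IsUnit M.det := (Matrix.isUnit_iff_isUnit_det M).mp hZ
  have hMHd : IsUnit (Mᴴ).det := by
    rw [Matrix.det_conjTranspose]; exact hMd.star
  have hzz : star z * z = 1 := by
    have h1 : ‖z‖ = 1 := by rw [hzdef]; exact Complex.norm_exp_I_mul_ofReal θ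
    rw [Complex.star_def, ← Complex.normSq_eq_conj_mul_self, Complex.normSq_eq_norm_sq, h1]
    norm_num
  simp only [Spencil, Tpencil, fromBlocks_mulVec] at heig
  rw [fromBlocks_mulVec] at hvu
  have h1 : (A - B * (Rmat D γ)⁻¹ * Dᴴ * C) *ᵥ q
      + (-((γ:ℂ) • (B * (Rmat D γ)⁻¹ * Bᴴ))) *ᵥ s = z • (E *ᵥ q + 0 *ᵥ s) :=
    funext fun i => congrFun heig (Sum.inl i)
  have h2 : 0 *ᵥ q + Eᴴ *ᵥ s
      = z • ((-((γ:ℂ) • (Cᴴ * (Smat D γ)⁻¹ * C))) *ᵥ q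
        + (A - B * (Rmat D γ)⁻¹ * Dᴴ * C)ᴴ *ᵥ s) :=
    funext fun i => congrFun heig (Sum.inr i)
  have hv : v = (-((Rmat D γ)⁻¹ * Dᴴ)) *ᵥ (C *ᵥ q)
      + (-((γ:ℂ) • (Rmat D γ)⁻¹)) *ᵥ (Bᴴ *ᵥ s) :=
    funext fun i => congrFun hvu (Sum.inl i)
  have hu : u = (-((γ:ℂ) • (Smat D γ)⁻¹)) *ᵥ (C *ᵥ q)
      + (-(D * (Rmat D γ)⁻¹)) *ᵥ (Bᴴ *ᵥ s) :=
    funext fun i => congrFun hvu (Sum.inr i)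
  have h2' : star z • (0 *ᵥ q + Eᴴ *ᵥ s)
      = (-((γ:ℂ) • (Cᴴ * (Smat D γ)⁻¹ * C))) *ᵥ q
        + (A - B * (Rmat D γ)⁻¹ * Dᴴ * C)ᴴ *ᵥ s := by
    rw [h2, smul_smul, hzz, one_smul]
  simp only [conjTranspose_sub, conjTranspose_mul, conjTranspose_conjTranspose,
    Rmat_inv_herm] at h2'
  simp only [Matrix.sub_mulVec, Matrix.add_mulVec, Matrix.neg_mulVec, Matrix.mulVec_add,
    Matrix.mulVec_sub, Matrix.mulVec_neg, Matrix.mulVec_smul, Matrix.smul_mulVec,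
    Matrix.zero_mulVec, Matrix.mulVec_zero, ← Matrix.mulVec_mulVec, zero_add, add_zero,
    smul_add, smul_sub, smul_neg, smul_smul] at h1 h2' hv hu
  have key1v := congrArg (fun X => X *ᵥ (C *ᵥ q)) (one_sub_DRD D γ hR hS)
  have key2v := congrArg (fun X => X *ᵥ (C *ᵥ q)) (Dh_mul_Sinv D γ hR hS)
  have key3v := congrArg (fun X => X *ᵥ (Bᴴ *ᵥ s)) (one_sub_DDR D γ hR)
  simp only [Matrix.sub_mulVec, Matrix.add_mulVec, Matrix.neg_mulVec, Matrix.mulVec_add,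
    Matrix.mulVec_sub, Matrix.mulVec_neg, Matrix.mulVec_smul, Matrix.smul_mulVec,
    Matrix.zero_mulVec, Matrix.mulVec_zero, ← Matrix.mulVec_mulVec, zero_add, add_zero,
    smul_add, smul_sub, smul_neg, smul_smul, Matrix.one_mulVec] at key1v key2v key3v
  have step1 : M *ᵥ q = B *ᵥ v := by
    rw [hMdef, hv]
    simp only [Matrix.sub_mulVec, Matrix.add_mulVec, Matrix.neg_mulVec, Matrix.mulVec_add,
      Matrix.mulVec_sub, Matrix.mulVec_neg, Matrix.mulVec_smul, Matrix.smul_mulVec,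
      Matrix.zero_mulVec, Matrix.mulVec_zero, ← Matrix.mulVec_mulVec, zero_add, add_zero,
      smul_add, smul_sub, smul_neg, smul_smul]
    linear_combination (norm := module) -h1
  have step2 : Mᴴ *ᵥ s = Cᴴ *ᵥ u := by
    rw [hMdef, hu]
    simp only [conjTranspose_sub, conjTranspose_smul, Matrix.sub_mulVec, Matrix.add_mulVec,
      Matrix.neg_mulVec, Matrix.mulVec_add, Matrix.mulVec_sub, Matrix.mulVec_neg,
      Matrix.mulVec_smul, Matrix.smul_mulVec, Matrix.zero_mulVec, Matrix.mulVec_zero,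
      ← Matrix.mulVec_mulVec, zero_add, add_zero, smul_add, smul_sub, smul_neg,
      smul_smul]
    linear_combination (norm := module) h2'
  have hq : M⁻¹ *ᵥ (B *ᵥ v) = q := by
    rw [← step1, Matrix.mulVec_mulVec, Matrix.nonsing_inv_mul _ hMd, Matrix.one_mulVec]
  have hsv : (Mᴴ)⁻¹ *ᵥ (Cᴴ *ᵥ u) = s := by
    rw [← step2, Matrix.mulVec_mulVec, Matrix.nonsing_inv_mul _ hMHd, Matrix.one_mulVec]
  have goal3 : (C * M⁻¹ * B + D) *ᵥ v = (γ:ℂ) • u := by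
    rw [Matrix.add_mulVec, ← Matrix.mulVec_mulVec, ← Matrix.mulVec_mulVec, hq, hu, hv]
    simp only [Matrix.sub_mulVec, Matrix.add_mulVec, Matrix.neg_mulVec, Matrix.mulVec_add,
      Matrix.mulVec_sub, Matrix.mulVec_neg, Matrix.mulVec_smul, Matrix.smul_mulVec,
      Matrix.zero_mulVec, Matrix.mulVec_zero, ← Matrix.mulVec_mulVec, zero_add, add_zero,
      smul_add, smul_sub, smul_neg, smul_smul]
    linear_combination (norm := module) key1v
  have goal4 : (C * M⁻¹ * B + D)ᴴ *ᵥ u = (γ:ℂ) • v := by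
    simp only [conjTranspose_add, conjTranspose_mul, Matrix.conjTranspose_nonsing_inv]
    rw [Matrix.add_mulVec, ← Matrix.mulVec_mulVec, ← Matrix.mulVec_mulVec, hsv, hu, hv]
    simp only [Matrix.sub_mulVec, Matrix.add_mulVec, Matrix.neg_mulVec, Matrix.mulVec_add,
      Matrix.mulVec_sub, Matrix.mulVec_neg, Matrix.mulVec_smul, Matrix.smul_mulVec,
      Matrix.zero_mulVec, Matrix.mulVec_zero, ← Matrix.mulVec_mulVec, zero_add, add_zero,
      smul_add, smul_sub, smul_neg, smul_smul]
    linear_combination (norm := module) key3v - (γ:ℂ) • key2v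
  have hγ0 : (γ:ℂ) ≠ 0 := Complex.ofReal_ne_zero.mpr hγ.ne'
  have hv0 : v ≠ 0 := by
    intro h0
    have hu0 : u = 0 := by
      have h := goal3
      rw [h0, Matrix.mulVec_zero] at h
      exact (smul_eq_zero.mp h.symm).resolve_left hγ0
    apply hqs
    have hq0 : q = 0 := by
      have hz' : M *ᵥ q = 0 := by rw [step1, h0, Matrix.mulVec_zero]
      calc q = (M⁻¹ * M) *ᵥ q := by rw [Matrix.nonsing_inv_mul _ hMd, Matrix.one_mulVec]
        _ = M⁻¹ *ᵥ (M *ᵥ q) := (Matrix.mulVec_mulVec _ _ _).symm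
        _ = 0 := by rw [hz', Matrix.mulVec_zero]
    have hs0 : s = 0 := by
      have hz' : Mᴴ *ᵥ s = 0 := by rw [step2, hu0, Matrix.mulVec_zero]
      calc s = ((Mᴴ)⁻¹ * Mᴴ) *ᵥ s := by rw [Matrix.nonsing_inv_mul _ hMHd, Matrix.one_mulVec]
        _ = (Mᴴ)⁻¹ *ᵥ (Mᴴ *ᵥ s) := (Matrix.mulVec_mulVec _ _ _).symm
        _ = 0 := by rw [hz', Matrix.mulVec_zero]
    rw [hq0, hs0]
    funext i
    cases i <;> rfl
  have hu0' : u ≠ 0 := by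
    intro h0
    apply hv0
    have h := goal4
    rw [h0, Matrix.mulVec_zero] at h
    exact (smul_eq_zero.mp h.symm).resolve_left hγ0
  exact ⟨hu0', hv0, goal3, goal4⟩
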